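/- For the (q,1,v,1)-deformed operators on the quadrabasic Fock space, the commutation relation A_{ξ₁⊗η₁} A*_{ξ₂⊗η₂} − qv·A*_{ξ₂⊗η₂} A_{ξ₁⊗η₁} = q⟨η₁,η₂⟩·(a*_{q,1}(ξ₂)a_{q,1}(ξ₁) ⊗ I) + v⟨ξ₁,ξ₂⟩·(I ⊗ a*_{v,1}(η₂)a_{v,1}(η₁)) + ⟨ξ₁,ξ₂⟩⟨η₁,η₂⟩·(I ⊗ I) holds. -/

import Mathlib

open scoped RealInnerProductSpace

noncomputable section

variable {H K : Type*} [NormedAddCommGroup H] [InnerProductSpace ℝ H]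
  [NormedAddCommGroup K] [InnerProductSpace ℝ K]

/-- The algebraic full Fock space, modelled as the free module on finite sequences of
vectors. -/
abbrev FockModel (H : Type*) := List H →₀ ℝ

/-- The diagonal Fock space over a pair of Hilbert spaces. -/
abbrev DiagFock (H K : Type*) := (List H × List K) →₀ ℝ

/-- The creation operator `a*(ξ)`. -/
def creOp (ξ : H) : FockModel H →ₗ[ℝ] FockModel H :=
  Finsupp.lmapDomain ℝ ℝ (fun l => ξ :: l)

/-- The `(q,t)`-annihilation operator. -/
def annOp (q t : ℝ) (ξ : H) : FockModel H →ₗ[ℝ] FockModel H :=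
  Finsupp.linearCombination ℝ (fun l : List H =>
    ∑ i ∈ Finset.range l.length,
      (q ^ i * t ^ (l.length - 1 - i) * ⟪ξ, l.getD i 0⟫) • Finsupp.single (l.eraseIdx i) (1 : ℝ))

/-- The tensor product `S ⊗_S T` of operators, acting on the diagonal Fock space. -/
def tensOp (S : FockModel H →ₗ[ℝ] FockModel H) (T : FockModel K →ₗ[ℝ] FockModel K) :
    DiagFock H K →ₗ[ℝ] DiagFock H K :=
  Finsupp.linearCombination ℝ (fun p : List H × List K =>
    (S (Finsupp.single p.1 1)).sum fun l a =>
      (T (Finsupp.single p.2 1)).sum fun m b => (a * b) • Finsupp.single (l, m) (1 : ℝ))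

/-- Bilinear pairing sending `f ⊗ g` to the corresponding element of the diagonal Fock
space. -/
def phi : FockModel H →ₗ[ℝ] FockModel K →ₗ[ℝ] DiagFock H K :=
  Finsupp.linearCombination ℝ (fun l =>
    Finsupp.linearCombination ℝ (fun m => Finsupp.single (l, m) (1 : ℝ)))

omit [NormedAddCommGroup H] [InnerProductSpace ℝ H] [NormedAddCommGroup K]
  [InnerProductSpace ℝ K] in
lemma phi_single_single (l : List H) (m : List K) (a b : ℝ) :
    phi (Finsupp.single l a) (Finsupp.single m b) = (a * b) • Finsupp.single (l, m) (1 : ℝ) := by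
  simp [phi, Finsupp.linearCombination_single, mul_smul]

omit [NormedAddCommGroup H] [InnerProductSpace ℝ H] [NormedAddCommGroup K]
  [InnerProductSpace ℝ K] in
lemma tensOp_single (S : FockModel H →ₗ[ℝ] FockModel H) (T : FockModel K →ₗ[ℝ] FockModel K)
    (p : List H × List K) :
    tensOp S T (Finsupp.single p 1)
      = phi (S (Finsupp.single p.1 1)) (T (Finsupp.single p.2 1)) := by
  rw [tensOp, Finsupp.linearCombination_single, one_smul, phi,
    Finsupp.linearCombination_apply, LinearMap.finsupp_sum_apply]
  refine Finsupp.sum_congr fun l _ => ?_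
  rw [LinearMap.smul_apply, Finsupp.linearCombination_apply, Finsupp.smul_sum]
  exact Finsupp.sum_congr fun m _ => by rw [smul_smul]

omit [NormedAddCommGroup H] [InnerProductSpace ℝ H] [NormedAddCommGroup K]
  [InnerProductSpace ℝ K] in
lemma tensOp_phi (S : FockModel H →ₗ[ℝ] FockModel H) (T : FockModel K →ₗ[ℝ] FockModel K)
    (f : FockModel H) (g : FockModel K) :
    tensOp S T (phi f g) = phi (S f) (T g) := by
  induction f using Finsupp.induction_linear with
  | zero => simp
  | add f₁ f₂ h₁ h₂ => simp [map_add, h₁, h₂]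
  | single l a =>
    induction g using Finsupp.induction_linear with
    | zero => simp
    | add g₁ g₂ h₁ h₂ => simp [map_add, h₁, h₂]
    | single m b =>
      rw [phi_single_single, map_smul, tensOp_single]
      have h1 : (Finsupp.single l a : FockModel H) = a • Finsupp.single l 1 := by
        rw [Finsupp.smul_single, smul_eq_mul, mul_one]
      have h2 : (Finsupp.single m b : FockModel K) = b • Finsupp.single m 1 := by
        rw [Finsupp.smul_single, smul_eq_mul, mul_one]
      rw [h1, h2, map_smul, map_smul, map_smul, map_smul, LinearMap.smul_apply, smul_smul,
        mul_comm a b]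

omit [NormedAddCommGroup H] [InnerProductSpace ℝ H] [NormedAddCommGroup K]
  [InnerProductSpace ℝ K] in
lemma tensOp_ext {F G : DiagFock H K →ₗ[ℝ] DiagFock H K}
    (h : ∀ p : List H × List K, F (Finsupp.single p 1) = G (Finsupp.single p 1)) : F = G := by
  apply Finsupp.lhom_ext
  intro p c
  have hc : (Finsupp.single p c : DiagFock H K) = c • Finsupp.single p 1 := by
    rw [Finsupp.smul_single, smul_eq_mul, mul_one]
  rw [hc, map_smul, map_smul, h]

omit [NormedAddCommGroup H] [InnerProductSpace ℝ H] [NormedAddCommGroup K]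
  [InnerProductSpace ℝ K] in
lemma tensOp_comp (S S' : FockModel H →ₗ[ℝ] FockModel H)
    (T T' : FockModel K →ₗ[ℝ] FockModel K) :
    tensOp S T ∘ₗ tensOp S' T' = tensOp (S ∘ₗ S') (T ∘ₗ T') := by
  refine tensOp_ext fun p => ?_
  rw [LinearMap.comp_apply, tensOp_single, tensOp_phi, tensOp_single]
  rfl

omit [NormedAddCommGroup H] [InnerProductSpace ℝ H] [NormedAddCommGroup K]
  [InnerProductSpace ℝ K] in
lemma tensOp_add_left (S S' : FockModel H →ₗ[ℝ] FockModel H)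
    (T : FockModel K →ₗ[ℝ] FockModel K) :
    tensOp (S + S') T = tensOp S T + tensOp S' T := by
  refine tensOp_ext fun p => ?_
  simp only [tensOp_single, LinearMap.add_apply, map_add]

omit [NormedAddCommGroup H] [InnerProductSpace ℝ H] [NormedAddCommGroup K]
  [InnerProductSpace ℝ K] in
lemma tensOp_add_right (S : FockModel H →ₗ[ℝ] FockModel H)
    (T T' : FockModel K →ₗ[ℝ] FockModel K) :
    tensOp S (T + T') = tensOp S T + tensOp S T' := by
  refine tensOp_ext fun p => ?_
  simp only [tensOp_single, LinearMap.add_apply, map_add]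

omit [NormedAddCommGroup H] [InnerProductSpace ℝ H] [NormedAddCommGroup K]
  [InnerProductSpace ℝ K] in
lemma tensOp_smul_left (a : ℝ) (S : FockModel H →ₗ[ℝ] FockModel H)
    (T : FockModel K →ₗ[ℝ] FockModel K) :
    tensOp (a • S) T = a • tensOp S T := by
  refine tensOp_ext fun p => ?_
  simp only [tensOp_single, LinearMap.smul_apply, map_smul]

omit [NormedAddCommGroup H] [InnerProductSpace ℝ H] [NormedAddCommGroup K]
  [InnerProductSpace ℝ K] in
lemma tensOp_smul_right (a : ℝ) (S : FockModel H →ₗ[ℝ] FockModel H)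
    (T : FockModel K →ₗ[ℝ] FockModel K) :
    tensOp S (a • T) = a • tensOp S T := by
  refine tensOp_ext fun p => ?_
  simp only [tensOp_single, LinearMap.smul_apply, map_smul]

omit [NormedAddCommGroup K] [InnerProductSpace ℝ K] in
lemma ann_comp_cre (q : ℝ) (ξ ζ : H) :
    annOp q 1 ξ ∘ₗ creOp ζ = q • (creOp ζ ∘ₗ annOp q 1 ξ) + ⟪ξ, ζ⟫ • LinearMap.id := by
  apply Finsupp.lhom_ext
  intro l c
  have hc : (Finsupp.single l c : FockModel H) = c • Finsupp.single l 1 := by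
    rw [Finsupp.smul_single, smul_eq_mul, mul_one]
  rw [hc]
  simp only [map_smul, LinearMap.add_apply, LinearMap.smul_apply, LinearMap.comp_apply,
    LinearMap.id_apply]
  congr 1
  rw [show (creOp ζ) (Finsupp.single l 1) = Finsupp.single (ζ :: l) 1 by
    simp [creOp, Finsupp.mapDomain_single]]
  rw [annOp, Finsupp.linearCombination_single, one_smul, Finsupp.linearCombination_single,
    one_smul]
  rw [List.length_cons, Finset.sum_range_succ']
  simp only [List.getD_cons_succ, List.getD_cons_zero, List.eraseIdx_cons_succ,
    List.eraseIdx_cons_zero, one_pow, one_mul, pow_zero, pow_succ, map_sum]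
  congr 1
  rw [Finset.smul_sum]
  refine Finset.sum_congr rfl fun i _ => ?_
  rw [map_smul, show (creOp ζ) (Finsupp.single (l.eraseIdx i) 1)
      = Finsupp.single (ζ :: l.eraseIdx i) 1 by
    simp [creOp, Finsupp.mapDomain_single], smul_smul]
  ring_nf

/-- The quadrabasic commutation relation for `t = w = 1`:
`A_{ξ₁⊗η₁} A*_{ξ₂⊗η₂} − qv · A*_{ξ₂⊗η₂} A_{ξ₁⊗η₁}
  = q⟨η₁,η₂⟩ (a*_{q,1}(ξ₂)a_{q,1}(ξ₁) ⊗ I) + v⟨ξ₁,ξ₂⟩ (I ⊗ a*_{v,1}(η₂)a_{v,1}(η₁))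
    + ⟨ξ₁,ξ₂⟩⟨η₁,η₂⟩ (I ⊗ I)`. -/
theorem quadrabasic_commutation_relation (q v : ℝ) (ξ₁ ξ₂ : H) (η₁ η₂ : K) :
    (tensOp (annOp q 1 ξ₁) (annOp v 1 η₁)) ∘ₗ (tensOp (creOp ξ₂) (creOp η₂)) -
        (q * v) • ((tensOp (creOp ξ₂) (creOp η₂)) ∘ₗ (tensOp (annOp q 1 ξ₁) (annOp v 1 η₁))) =
      (q * ⟪η₁, η₂⟫) • tensOp ((creOp ξ₂) ∘ₗ (annOp q 1 ξ₁)) LinearMap.id +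
        (v * ⟪ξ₁, ξ₂⟫) • tensOp LinearMap.id ((creOp η₂) ∘ₗ (annOp v 1 η₁)) +
        (⟪ξ₁, ξ₂⟫ * ⟪η₁, η₂⟫) • tensOp (LinearMap.id : FockModel H →ₗ[ℝ] FockModel H)
          (LinearMap.id : FockModel K →ₗ[ℝ] FockModel K) := by
  rw [tensOp_comp, tensOp_comp, ann_comp_cre, ann_comp_cre]
  simp only [tensOp_add_left, tensOp_add_right, tensOp_smul_left, tensOp_smul_right]
  module

end
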